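/- Let (X,dist) be a metric space, f : X → X a bijection, V a Banach space, and A : X → GL(V) an α-Hölder map with constant M such that sup_{x∈X} ‖A(x)^{-1}‖ ≤ e^{−λ*} for some λ* ∈ ℝ. Fix reals λ₋ ≤ λ₊, ε > 0 and γ > 0 with ε < αγ. Then there exists a constant c > 0, depending only on M, λ*, and αγ − ε, with the following property. Let ℓ ≥ 1, δ > 0, k ∈ ℕ, and let x, p ∈ X satisfy dist(f^i x, f^i p) ≤ δ·e^{−γ·min(i, k−i)} for every i = 0,…,k. Suppose there are norms N_0,…,N_k on V such that for all u ∈ V and 0 ≤ i ≤ k: ‖u‖ ≤ N_i(u) ≤ ℓ·e^{ε·min(i,k−i)}·‖u‖, and for 0 ≤ i ≤ k−1: N_{i+1}(A(f^i x)u) ≤ e^{λ₊+ε}·N_i(u) and N_i(A(f^i x)^{-1}u) ≤ e^{−λ₋+ε}·N_{i+1}(u). Then for every i = 0,…,k: ‖A^i_p‖ ≤ ℓ·e^{c·ℓ·δ^α}·e^{i(λ₊+ε)} and ‖(A^i_p)^{-1}‖ ≤ ℓ·e^{ε·min(i,k−i)}·e^{c·ℓ·δ^α}·e^{i(−λ₋+ε)}.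 -/

import Mathlib

/-- The cocycle generated by `A : X → GL(V)` over `f`. -/
noncomputable def cocycle {X : Type*} {V : Type*} [NormedAddCommGroup V] [NormedSpace ℝ V]
    (f : X → X) (A : X → (V →L[ℝ] V)ˣ) : ℕ → X → (V →L[ℝ] V)ˣ
  | 0, _ => 1
  | n + 1, x => cocycle f A n (f x) * A x


lemma cocycle_succ' {X V : Type*} [NormedAddCommGroup V] [NormedSpace ℝ V]
    (f : X → X) (A : X → (V →L[ℝ] V)ˣ) (n : ℕ) (x : X) :
    cocycle f A (n+1) x = A (f^[n] x) * cocycle f A n x := by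
  induction n generalizing x with
  | zero => simp [cocycle]
  | succ n ih =>
    rw [show cocycle f A (n+1+1) x = cocycle f A (n+1) (f x) * A x from rfl,
      ih (f x), ← Function.iterate_succ_apply, mul_assoc]
    rfl

lemma cocycle_zero {X V : Type*} [NormedAddCommGroup V] [NormedSpace ℝ V]
    (f : X → X) (A : X → (V →L[ℝ] V)ˣ) (x : X) : cocycle f A 0 x = 1 := rfl

set_option maxHeartbeats 2000000 in
/-- norm estimates along a closely shadowing orbit, cf. Lemma 4.1 of
[KS17]: for an `α`-Hölder `GL(V)`-valued cocycle with `sup‖A(x)⁻¹‖ ≤ e^{−λ*}` and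
`ε < αγ`, there is a constant `c > 0` (depending only on the Hölder constant `M`, `λ*`
and `αγ − ε`) such that whenever the orbit segments of `x` and `p` of length `k` are
`δ·e^{−γ·min(i,k−i)}`-close and there are Lyapunov-like norms `N_0,…,N_k` along the orbit
of `x`, one has `‖A^i_p‖ ≤ ℓ·e^{cℓδ^α}·e^{i(λ₊+ε)}` and
`‖(A^i_p)⁻¹‖ ≤ ℓ·e^{ε·min(i,k−i)}·e^{cℓδ^α}·e^{i(−λ₋+ε)}` for `0 ≤ i ≤ k`. -/
theorem norm_estimates_along_pseudo_orbit {X V : Type*} [MetricSpace X]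
    [NormedAddCommGroup V] [NormedSpace ℝ V] [CompleteSpace V]
    (f : X → X) (hf : Function.Bijective f) (A : X → (V →L[ℝ] V)ˣ)
    (α M lamStar : ℝ) (hα : 0 < α)
    (hHolder : ∀ x y : X,
      ‖(A x).val - (A y).val‖ + ‖((A x)⁻¹ : (V →L[ℝ] V)ˣ).val - ((A y)⁻¹ : (V →L[ℝ] V)ˣ).val‖ ≤
        M * dist x y ^ α)
    (hbound : ∀ x : X, ‖((A x)⁻¹ : (V →L[ℝ] V)ˣ).val‖ ≤ Real.exp (-lamStar))
    (lp lm ε γ : ℝ) (hll : lm ≤ lp) (hε : 0 < ε) (hγ : 0 < γ) (hεαγ : ε < α * γ) :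
    ∃ c > (0 : ℝ), ∀ ℓ : ℝ, 1 ≤ ℓ → ∀ δ > (0 : ℝ), ∀ k : ℕ, ∀ x p : X,
      (∀ i : ℕ, i ≤ k →
        dist (f^[i] x) (f^[i] p) ≤ δ * Real.exp (-γ * ((min i (k - i) : ℕ) : ℝ))) →
      ∀ N : ℕ → V → ℝ,
        (∀ i : ℕ, i ≤ k → ∀ u : V,
          ‖u‖ ≤ N i u ∧ N i u ≤ ℓ * Real.exp (ε * ((min i (k - i) : ℕ) : ℝ)) * ‖u‖) →
        (∀ i : ℕ, i < k → ∀ u : V,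
          N (i + 1) ((A (f^[i] x)).val u) ≤ Real.exp (lp + ε) * N i u ∧
          N i (((A (f^[i] x))⁻¹ : (V →L[ℝ] V)ˣ).val u) ≤ Real.exp (-lm + ε) * N (i + 1) u) →
        ∀ i : ℕ, i ≤ k →
          ‖(cocycle f A i p).val‖ ≤
            ℓ * Real.exp (c * ℓ * δ ^ α) * Real.exp ((i : ℝ) * (lp + ε)) ∧
          ‖((cocycle f A i p)⁻¹ : (V →L[ℝ] V)ˣ).val‖ ≤
            ℓ * Real.exp (ε * ((min i (k - i) : ℕ) : ℝ)) * Real.exp (c * ℓ * δ ^ α) *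
              Real.exp ((i : ℝ) * (-lm + ε)) := by
  classical
  set β : ℝ := α * γ - ε with hβdef
  have hβ : 0 < β := by simp only [hβdef]; linarith
  set r : ℝ := Real.exp (-β) with hrdef
  have hr0 : 0 < r := Real.exp_pos _
  have hr1 : r < 1 := Real.exp_lt_one_iff.mpr (by linarith)
  set M' : ℝ := max M 0 with hM'def
  have hM'0 : 0 ≤ M' := le_max_right _ _
  set K : ℝ := M' * (Real.exp (-lp) + Real.exp (lm - ε)) + 1 with hKdef
  have hK0 : 0 < K := by positivity
  set S : ℝ := 2 / (1 - r) with hSdef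
  have hS0 : 0 < S := by
    have : 0 < 1 - r := by linarith
    positivity
  refine ⟨K * S, by positivity, ?_⟩
  intro ℓ hℓ δ hδ k x p hdist N hN hNA
  have hℓ0 : 0 < ℓ := lt_of_lt_of_le one_pos hℓ
  have hδα : 0 < δ ^ α := Real.rpow_pos_of_pos hδ α
  -- abbreviation for partial sums
  set R : ℕ → ℝ := fun i => ∑ j ∈ Finset.range i, r ^ min j (k - j) with hRdef
  have hR0 : ∀ i, 0 ≤ R i := fun i =>
    Finset.sum_nonneg fun j _ => pow_nonneg hr0.le _
  have hRsucc : ∀ i, R (i + 1) = R i + r ^ min i (k - i) := fun i =>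
    Finset.sum_range_succ _ i
  -- geometric sum bound
  have hgeom : ∀ n : ℕ, ∑ j ∈ Finset.range n, r ^ j ≤ 1 / (1 - r) := by
    intro n
    rw [geom_sum_eq (by intro h; linarith [h.le] : r ≠ 1) n]
    have hpos : (0:ℝ) < 1 - r := by linarith
    have heq : (r ^ n - 1) / (r - 1) = (1 - r ^ n) / (1 - r) := by
      rw [div_eq_div_iff (by linarith) (by linarith)]; ring
    rw [heq, div_le_div_iff₀ hpos hpos]
    have h1 : (0:ℝ) ≤ r ^ n := pow_nonneg hr0.le n
    nlinarith
  have hRle : ∀ i, i ≤ k → R i ≤ S := by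
    intro i hik
    have h1 : R i ≤ (∑ j ∈ Finset.range i, r ^ j) + ∑ j ∈ Finset.range i, r ^ (k - j) := by
      rw [← Finset.sum_add_distrib]
      refine Finset.sum_le_sum fun j _ => ?_
      rcases le_total j (k - j) with h | h
      · rw [min_eq_left h]
        have : (0:ℝ) ≤ r ^ (k - j) := pow_nonneg hr0.le _
        linarith
      · rw [min_eq_right h]
        have : (0:ℝ) ≤ r ^ j := pow_nonneg hr0.le _
        linarith
    have h2 : ∑ j ∈ Finset.range i, r ^ (k - j) ≤ ∑ j ∈ Finset.range (k+1), r ^ j := by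
      have himg : ∑ j ∈ Finset.range i, r ^ (k - j)
          = ∑ n ∈ (Finset.range i).image (fun j => k - j), r ^ n := by
        rw [Finset.sum_image]
        intro a ha b hb hab
        simp only [Finset.mem_coe, Finset.mem_range] at ha hb hab
        omega
      rw [himg]
      refine Finset.sum_le_sum_of_subset_of_nonneg ?_ (fun j _ _ => pow_nonneg hr0.le _)
      intro n hn
      simp only [Finset.mem_image, Finset.mem_range] at hn ⊢
      obtain ⟨j, hj, rfl⟩ := hn
      omega
    have h3 := hgeom i
    have h4 := hgeom (k+1)
    rw [hSdef]
    have : (2:ℝ) / (1 - r) = 1 / (1-r) + 1/(1-r) := by ring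
    rw [this]
    linarith
  -- Hölder/closeness bound on the differences
  have hΔ : ∀ j, j ≤ k →
      ‖(A (f^[j] p)).val - (A (f^[j] x)).val‖ ≤
        M' * δ ^ α * Real.exp (-(α * γ) * ((min j (k - j) : ℕ) : ℝ)) ∧
      ‖((A (f^[j] p))⁻¹ : (V →L[ℝ] V)ˣ).val - ((A (f^[j] x))⁻¹ : (V →L[ℝ] V)ˣ).val‖ ≤
        M' * δ ^ α * Real.exp (-(α * γ) * ((min j (k - j) : ℕ) : ℝ)) := by
    intro j hj
    have hd : dist (f^[j] p) (f^[j] x) ≤ δ * Real.exp (-γ * ((min j (k - j) : ℕ) : ℝ)) := by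
      rw [dist_comm]; exact hdist j hj
    have hH := hHolder (f^[j] p) (f^[j] x)
    have hne1 : (0:ℝ) ≤ ‖(A (f^[j] p)).val - (A (f^[j] x)).val‖ := norm_nonneg _
    have hne2 : (0:ℝ) ≤ ‖((A (f^[j] p))⁻¹ : (V →L[ℝ] V)ˣ).val -
        ((A (f^[j] x))⁻¹ : (V →L[ℝ] V)ˣ).val‖ := norm_nonneg _
    have hda : dist (f^[j] p) (f^[j] x) ^ α ≤
        δ ^ α * Real.exp (-(α * γ) * ((min j (k - j) : ℕ) : ℝ)) := by
      calc dist (f^[j] p) (f^[j] x) ^ α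
          ≤ (δ * Real.exp (-γ * ((min j (k - j) : ℕ) : ℝ))) ^ α :=
            Real.rpow_le_rpow dist_nonneg hd hα.le
        _ = δ ^ α * (Real.exp (-γ * ((min j (k - j) : ℕ) : ℝ))) ^ α :=
            Real.mul_rpow hδ.le (Real.exp_pos _).le
        _ = δ ^ α * Real.exp (-(α * γ) * ((min j (k - j) : ℕ) : ℝ)) := by
            rw [Real.rpow_def_of_pos (Real.exp_pos _), Real.log_exp]
            ring_nf
    have hMM' : M * dist (f^[j] p) (f^[j] x) ^ α ≤
        M' * (δ ^ α * Real.exp (-(α * γ) * ((min j (k - j) : ℕ) : ℝ))) := by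
      calc M * dist (f^[j] p) (f^[j] x) ^ α
          ≤ M' * dist (f^[j] p) (f^[j] x) ^ α :=
            mul_le_mul_of_nonneg_right (le_max_left M 0)
              (Real.rpow_nonneg dist_nonneg α)
        _ ≤ M' * (δ ^ α * Real.exp (-(α * γ) * ((min j (k - j) : ℕ) : ℝ))) :=
            mul_le_mul_of_nonneg_left hda hM'0
    constructor
    · calc ‖(A (f^[j] p)).val - (A (f^[j] x)).val‖
          ≤ M * dist (f^[j] p) (f^[j] x) ^ α := by linarith
        _ ≤ M' * (δ ^ α * Real.exp (-(α * γ) * ((min j (k - j) : ℕ) : ℝ))) := hMM'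
        _ = M' * δ ^ α * Real.exp (-(α * γ) * ((min j (k - j) : ℕ) : ℝ)) := by ring
    · calc ‖((A (f^[j] p))⁻¹ : (V →L[ℝ] V)ˣ).val - ((A (f^[j] x))⁻¹ : (V →L[ℝ] V)ˣ).val‖
          ≤ M * dist (f^[j] p) (f^[j] x) ^ α := by linarith
        _ ≤ M' * (δ ^ α * Real.exp (-(α * γ) * ((min j (k - j) : ℕ) : ℝ))) := hMM'
        _ = M' * δ ^ α * Real.exp (-(α * γ) * ((min j (k - j) : ℕ) : ℝ)) := by ring
  -- L1 : forward contraction along the true orbit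
  have L1 : ∀ n j : ℕ, j + n ≤ k → ∀ u : V,
      N (j + n) ((cocycle f A n (f^[j] x)).val u) ≤ Real.exp (n * (lp + ε)) * N j u := by
    intro n
    induction n with
    | zero =>
      intro j hj u
      simp [cocycle]
    | succ n ih =>
      intro j hj u
      have hjn : j + n < k := by omega
      rw [cocycle_succ', ← Function.iterate_add_apply]
      rw [Units.val_mul, ContinuousLinearMap.mul_apply]
      calc N (j + (n+1)) ((A (f^[n + j] x)).val ((cocycle f A n (f^[j] x)).val u))
          = N ((j + n) + 1) ((A (f^[j + n] x)).val ((cocycle f A n (f^[j] x)).val u)) := by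
            rw [Nat.add_comm n j]; ring_nf
        _ ≤ Real.exp (lp + ε) * N (j + n) ((cocycle f A n (f^[j] x)).val u) :=
            (hNA (j + n) hjn _).1
        _ ≤ Real.exp (lp + ε) * (Real.exp (n * (lp + ε)) * N j u) := by
            have h := ih j (by omega) u
            have h2 : ‖((cocycle f A n (f^[j] x)).val u)‖ ≥ 0 := norm_nonneg _
            exact mul_le_mul_of_nonneg_left h (Real.exp_pos _).le
        _ = Real.exp ((n + 1 : ℕ) * (lp + ε)) * N j u := by
            rw [← mul_assoc, ← Real.exp_add]; push_cast; ring_nf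
  -- L2 : backward contraction along the true orbit
  have L2 : ∀ n j : ℕ, j + n ≤ k → ∀ u : V,
      N j (((cocycle f A n (f^[j] x))⁻¹ : (V →L[ℝ] V)ˣ).val u) ≤
        Real.exp (n * (-lm + ε)) * N (j + n) u := by
    intro n
    induction n with
    | zero =>
      intro j hj u
      simp [cocycle]
    | succ n ih =>
      intro j hj u
      have hjn : j + n < k := by omega
      rw [cocycle_succ', ← Function.iterate_add_apply, mul_inv_rev,
        Units.val_mul, ContinuousLinearMap.mul_apply, Nat.add_comm n j]
      calc N j (((cocycle f A n (f^[j] x))⁻¹ : (V →L[ℝ] V)ˣ).val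
            (((A (f^[j + n] x))⁻¹ : (V →L[ℝ] V)ˣ).val u))
          ≤ Real.exp (n * (-lm + ε)) *
              N (j + n) (((A (f^[j + n] x))⁻¹ : (V →L[ℝ] V)ˣ).val u) :=
            ih j (by omega) _
        _ ≤ Real.exp (n * (-lm + ε)) * (Real.exp (-lm + ε) * N ((j + n) + 1) u) :=
            mul_le_mul_of_nonneg_left ((hNA (j + n) hjn u).2) (Real.exp_pos _).le
        _ = Real.exp ((n + 1 : ℕ) * (-lm + ε)) * N (j + (n + 1)) u := by
            rw [← mul_assoc, ← Real.exp_add]; push_cast; ring_nf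
  -- key one-step inequality (forward)
  have hstepA : ∀ i : ℕ, i < k →
      Real.exp (lp + ε) +
        ℓ * Real.exp (ε * ((min (i+1) (k-(i+1)) : ℕ) : ℝ)) *
          (M' * δ ^ α * Real.exp (-(α*γ) * ((min i (k-i) : ℕ) : ℝ))) ≤
      Real.exp (lp + ε) * Real.exp (K * ℓ * δ ^ α * r ^ (min i (k-i))) := by
    intro i hik
    set m0 : ℝ := ((min i (k-i) : ℕ) : ℝ) with hm0
    set m1 : ℝ := ((min (i+1) (k-(i+1)) : ℕ) : ℝ) with hm1
    have hm0nn : 0 ≤ m0 := Nat.cast_nonneg _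
    have hm10 : m1 ≤ m0 + 1 := by
      rw [hm0, hm1]
      have : min (i+1) (k-(i+1)) ≤ min i (k-i) + 1 := by omega
      exact_mod_cast this
    have hrpow : r ^ (min i (k-i)) = Real.exp (m0 * (-β)) := by
      rw [hrdef, ← Real.exp_nat_mul]
    have ht0 : 0 ≤ K * ℓ * δ ^ α * r ^ (min i (k-i)) := by positivity
    have hexp1 : 1 + K * ℓ * δ ^ α * r ^ (min i (k-i)) ≤
        Real.exp (K * ℓ * δ ^ α * r ^ (min i (k-i))) := by
      have := Real.add_one_le_exp (K * ℓ * δ ^ α * r ^ (min i (k-i)))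
      linarith
    have hmain : ℓ * Real.exp (ε * m1) * (M' * δ ^ α * Real.exp (-(α*γ) * m0)) ≤
        Real.exp (lp + ε) * (K * ℓ * δ ^ α * r ^ (min i (k-i))) := by
      rw [hrpow]
      have hEexp : Real.exp (ε * m1) * Real.exp (-(α*γ) * m0) ≤
          Real.exp (-lp) * (Real.exp (lp + ε) * Real.exp (m0 * (-β))) := by
        rw [← Real.exp_add, ← Real.exp_add, ← Real.exp_add, Real.exp_le_exp]
        have h1 : ε * m1 ≤ ε * (m0 + 1) := mul_le_mul_of_nonneg_left hm10 hε.le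
        rw [hβdef]; nlinarith
      have hMK : M' * Real.exp (-lp) ≤ K := by
        rw [hKdef]
        nlinarith [Real.exp_pos (lm - ε), Real.exp_pos (-lp)]
      calc ℓ * Real.exp (ε * m1) * (M' * δ ^ α * Real.exp (-(α*γ) * m0))
          = (M' * (Real.exp (ε * m1) * Real.exp (-(α*γ) * m0))) * (ℓ * δ ^ α) := by ring
        _ ≤ (M' * (Real.exp (-lp) * (Real.exp (lp + ε) * Real.exp (m0 * (-β))))) *
              (ℓ * δ ^ α) := by
            have := mul_le_mul_of_nonneg_left hEexp hM'0
            exact mul_le_mul_of_nonneg_right this (by positivity)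
        _ = (M' * Real.exp (-lp)) * (Real.exp (lp + ε) * Real.exp (m0 * (-β)) * (ℓ * δ ^ α)) := by
            ring
        _ ≤ K * (Real.exp (lp + ε) * Real.exp (m0 * (-β)) * (ℓ * δ ^ α)) :=
            mul_le_mul_of_nonneg_right hMK (by positivity)
        _ = Real.exp (lp + ε) * (K * ℓ * δ ^ α * Real.exp (m0 * (-β))) := by ring
    calc Real.exp (lp + ε) +
          ℓ * Real.exp (ε * m1) * (M' * δ ^ α * Real.exp (-(α*γ) * m0))
        ≤ Real.exp (lp + ε) + Real.exp (lp + ε) * (K * ℓ * δ ^ α * r ^ (min i (k-i))) := by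
          linarith
      _ = Real.exp (lp + ε) * (1 + K * ℓ * δ ^ α * r ^ (min i (k-i))) := by ring
      _ ≤ Real.exp (lp + ε) * Real.exp (K * ℓ * δ ^ α * r ^ (min i (k-i))) :=
          mul_le_mul_of_nonneg_left hexp1 (Real.exp_pos _).le
  -- Claim A : forward bound
  have ClaimA : ∀ i : ℕ, i ≤ k → ∀ n : ℕ, i + n ≤ k → ∀ u : V,
      ‖(cocycle f A n (f^[i] x)).val ((cocycle f A i p).val u)‖ ≤
        Real.exp (((i:ℝ) + n) * (lp + ε)) * Real.exp (K * ℓ * δ ^ α * R i) * (ℓ * ‖u‖) := by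
    intro i
    induction i with
    | zero =>
      intro _ n hn u
      have h4 : ((cocycle f A 0 p).val u) = u := by
        rw [cocycle_zero]; simp
      rw [h4]
      have hemp : R 0 = 0 := by simp [hRdef]
      rw [hemp, mul_zero, Real.exp_zero, mul_one]
      push_cast
      rw [zero_add]
      have h3 : N 0 u ≤ ℓ * ‖u‖ := by
        have h := (hN 0 (by omega) u).2
        simpa using h
      calc ‖(cocycle f A n (f^[0] x)).val u‖
          ≤ N (0 + n) ((cocycle f A n (f^[0] x)).val u) := (hN (0 + n) (by omega) _).1
        _ ≤ Real.exp (n * (lp + ε)) * N 0 u := L1 n 0 (by omega) u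
        _ ≤ Real.exp (n * (lp + ε)) * (ℓ * ‖u‖) :=
            mul_le_mul_of_nonneg_left h3 (Real.exp_pos _).le
    | succ i ih =>
      intro hik n hin u
      have hik' : i ≤ k := by omega
      have hilt : i < k := by omega
      set Qn := cocycle f A n (f^[i+1] x) with hQndef
      set v := (cocycle f A i p).val u with hvdef
      set D : V →L[ℝ] V := (A (f^[i] p)).val - (A (f^[i] x)).val with hDdef
      set m0 : ℝ := ((min i (k-i) : ℕ) : ℝ) with hm0
      set m1 : ℝ := ((min (i+1) (k-(i+1)) : ℕ) : ℝ) with hm1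
      have hsplit : (cocycle f A (i+1) p).val u = (A (f^[i] p)).val v := by
        rw [cocycle_succ', Units.val_mul, ContinuousLinearMap.mul_apply]
      have hdecomp : Qn.val ((A (f^[i] p)).val v)
          = Qn.val ((A (f^[i] x)).val v) + Qn.val (D v) := by
        rw [← map_add]
        congr 1
        simp [hDdef, ContinuousLinearMap.sub_apply]
      -- term 1
      have hterm1 : ‖Qn.val ((A (f^[i] x)).val v)‖ ≤
          Real.exp (((i:ℝ) + n) * (lp + ε)) * Real.exp (lp + ε) *
            Real.exp (K * ℓ * δ ^ α * R i) * (ℓ * ‖u‖) := by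
        have hcoc : cocycle f A (n+1) (f^[i] x) = Qn * A (f^[i] x) := by
          rw [hQndef, show cocycle f A (n+1) (f^[i] x)
              = cocycle f A n (f (f^[i] x)) * A (f^[i] x) from rfl,
            Function.iterate_succ_apply']
        have h := ih hik' (n+1) (by omega) u
        rw [hcoc, Units.val_mul, ContinuousLinearMap.mul_apply] at h
        calc ‖Qn.val ((A (f^[i] x)).val v)‖
            ≤ Real.exp (((i:ℝ) + (n+1:ℕ)) * (lp + ε)) * Real.exp (K * ℓ * δ ^ α * R i) *
              (ℓ * ‖u‖) := h
          _ = Real.exp (((i:ℝ) + n) * (lp + ε)) * Real.exp (lp + ε) *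
              Real.exp (K * ℓ * δ ^ α * R i) * (ℓ * ‖u‖) := by
              rw [show ((i:ℝ) + (n+1:ℕ)) * (lp + ε)
                  = ((i:ℝ) + n) * (lp + ε) + (lp + ε) by push_cast; ring, Real.exp_add]
      -- bound on ‖v‖
      have hvb : ‖v‖ ≤ Real.exp ((i:ℝ) * (lp + ε)) * Real.exp (K * ℓ * δ ^ α * R i) *
          (ℓ * ‖u‖) := by
        have h := ih hik' 0 (by omega) u
        simp only [cocycle, Units.val_one, ContinuousLinearMap.one_apply,
          Nat.cast_zero, add_zero] at h
        exact h
      -- term 2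
      have hterm2 : ‖Qn.val (D v)‖ ≤
          Real.exp ((n:ℝ) * (lp + ε)) * (ℓ * Real.exp (ε * m1)) *
            ((M' * δ ^ α * Real.exp (-(α*γ) * m0)) * ‖v‖) := by
        have hDb : ‖D v‖ ≤ (M' * δ ^ α * Real.exp (-(α*γ) * m0)) * ‖v‖ :=
          le_trans (ContinuousLinearMap.le_opNorm _ _)
            (mul_le_mul_of_nonneg_right (hΔ i hik').1 (norm_nonneg _))
        calc ‖Qn.val (D v)‖ ≤ N ((i+1) + n) (Qn.val (D v)) := (hN ((i+1)+n) (by omega) _).1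
          _ ≤ Real.exp ((n:ℝ) * (lp + ε)) * N (i+1) (D v) := L1 n (i+1) (by omega) _
          _ ≤ Real.exp ((n:ℝ) * (lp + ε)) * (ℓ * Real.exp (ε * m1) * ‖D v‖) :=
              mul_le_mul_of_nonneg_left ((hN (i+1) (by omega) _).2) (Real.exp_pos _).le
          _ ≤ Real.exp ((n:ℝ) * (lp + ε)) * (ℓ * Real.exp (ε * m1) *
                ((M' * δ ^ α * Real.exp (-(α*γ) * m0)) * ‖v‖)) := by
              refine mul_le_mul_of_nonneg_left ?_ (Real.exp_pos _).le
              exact mul_le_mul_of_nonneg_left hDb (by positivity)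
          _ = Real.exp ((n:ℝ) * (lp + ε)) * (ℓ * Real.exp (ε * m1)) *
                ((M' * δ ^ α * Real.exp (-(α*γ) * m0)) * ‖v‖) := by ring
      -- combine
      set G : ℝ := Real.exp (((i:ℝ) + n) * (lp + ε)) * Real.exp (K * ℓ * δ ^ α * R i) *
        (ℓ * ‖u‖) with hGdef
      have hG0 : 0 ≤ G := by
        rw [hGdef]; positivity
      have ht2 : Real.exp ((n:ℝ) * (lp + ε)) * (ℓ * Real.exp (ε * m1)) *
            ((M' * δ ^ α * Real.exp (-(α*γ) * m0)) *
              (Real.exp ((i:ℝ) * (lp + ε)) * Real.exp (K * ℓ * δ ^ α * R i) * (ℓ * ‖u‖)))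
          = G * (ℓ * Real.exp (ε * m1) * (M' * δ ^ α * Real.exp (-(α*γ) * m0))) := by
        rw [hGdef, show ((i:ℝ) + n) * (lp + ε) = (n:ℝ) * (lp + ε) + (i:ℝ) * (lp + ε) by ring,
          Real.exp_add]
        ring
      have htot : ‖Qn.val ((cocycle f A (i+1) p).val u)‖ ≤
          ‖Qn.val ((A (f^[i] x)).val v)‖ + ‖Qn.val (D v)‖ := by
        rw [hsplit, hdecomp]
        exact norm_add_le _ _
      have hsA := hstepA i hilt
      rw [← hm0, ← hm1] at hsA
      calc ‖Qn.val ((cocycle f A (i+1) p).val u)‖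
          ≤ ‖Qn.val ((A (f^[i] x)).val v)‖ + ‖Qn.val (D v)‖ := htot
        _ ≤ (Real.exp (((i:ℝ) + n) * (lp + ε)) * Real.exp (lp + ε) *
              Real.exp (K * ℓ * δ ^ α * R i) * (ℓ * ‖u‖)) +
            (Real.exp ((n:ℝ) * (lp + ε)) * (ℓ * Real.exp (ε * m1)) *
              ((M' * δ ^ α * Real.exp (-(α*γ) * m0)) *
                (Real.exp ((i:ℝ) * (lp + ε)) * Real.exp (K * ℓ * δ ^ α * R i) *
                  (ℓ * ‖u‖)))) := by
            refine add_le_add hterm1 (le_trans hterm2 ?_)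
            refine mul_le_mul_of_nonneg_left ?_ (by positivity)
            exact mul_le_mul_of_nonneg_left hvb (by positivity)
        _ = G * (Real.exp (lp + ε) +
              ℓ * Real.exp (ε * m1) * (M' * δ ^ α * Real.exp (-(α*γ) * m0))) := by
            rw [ht2, hGdef]; ring
        _ ≤ G * (Real.exp (lp + ε) * Real.exp (K * ℓ * δ ^ α * r ^ (min i (k-i)))) :=
            mul_le_mul_of_nonneg_left hsA hG0
        _ = Real.exp ((((i+1:ℕ):ℝ) + n) * (lp + ε)) *
              Real.exp (K * ℓ * δ ^ α * R (i+1)) * (ℓ * ‖u‖) := by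
            rw [hGdef, hRsucc i,
              show (((i+1:ℕ):ℝ) + n) * (lp + ε) = ((i:ℝ) + n) * (lp + ε) + (lp + ε) by
                push_cast; ring,
              Real.exp_add,
              show K * ℓ * δ ^ α * (R i + r ^ (min i (k-i)))
                = K * ℓ * δ ^ α * R i + K * ℓ * δ ^ α * r ^ (min i (k-i)) by ring,
              Real.exp_add]
            simp only [Real.exp_add]
            ring
  -- key one-step inequality (backward)
  have hstepB : ∀ i : ℕ, i < k →
      Real.exp (-lm + ε) +
        ℓ * Real.exp (ε * ((min i (k-i) : ℕ) : ℝ)) *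
          (M' * δ ^ α * Real.exp (-(α*γ) * ((min i (k-i) : ℕ) : ℝ))) ≤
      Real.exp (-lm + ε) * Real.exp (K * ℓ * δ ^ α * r ^ (min i (k-i))) := by
    intro i hik
    set m0 : ℝ := ((min i (k-i) : ℕ) : ℝ) with hm0
    have hrpow : r ^ (min i (k-i)) = Real.exp (m0 * (-β)) := by
      rw [hrdef, ← Real.exp_nat_mul]
    have hexp1 : 1 + K * ℓ * δ ^ α * r ^ (min i (k-i)) ≤
        Real.exp (K * ℓ * δ ^ α * r ^ (min i (k-i))) := by
      have := Real.add_one_le_exp (K * ℓ * δ ^ α * r ^ (min i (k-i)))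
      linarith
    have hmain : ℓ * Real.exp (ε * m0) * (M' * δ ^ α * Real.exp (-(α*γ) * m0)) ≤
        Real.exp (-lm + ε) * (K * ℓ * δ ^ α * r ^ (min i (k-i))) := by
      rw [hrpow]
      have hEexp : Real.exp (ε * m0) * Real.exp (-(α*γ) * m0) ≤
          Real.exp (lm - ε) * (Real.exp (-lm + ε) * Real.exp (m0 * (-β))) := by
        rw [← Real.exp_add, ← Real.exp_add, ← Real.exp_add, Real.exp_le_exp]
        rw [hβdef]; nlinarith
      have hMK : M' * Real.exp (lm - ε) ≤ K := by
        rw [hKdef]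
        nlinarith [Real.exp_pos (lm - ε), Real.exp_pos (-lp)]
      calc ℓ * Real.exp (ε * m0) * (M' * δ ^ α * Real.exp (-(α*γ) * m0))
          = (M' * (Real.exp (ε * m0) * Real.exp (-(α*γ) * m0))) * (ℓ * δ ^ α) := by ring
        _ ≤ (M' * (Real.exp (lm - ε) * (Real.exp (-lm + ε) * Real.exp (m0 * (-β))))) *
              (ℓ * δ ^ α) := by
            have := mul_le_mul_of_nonneg_left hEexp hM'0
            exact mul_le_mul_of_nonneg_right this (by positivity)
        _ = (M' * Real.exp (lm - ε)) *
              (Real.exp (-lm + ε) * Real.exp (m0 * (-β)) * (ℓ * δ ^ α)) := by ring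
        _ ≤ K * (Real.exp (-lm + ε) * Real.exp (m0 * (-β)) * (ℓ * δ ^ α)) :=
            mul_le_mul_of_nonneg_right hMK (by positivity)
        _ = Real.exp (-lm + ε) * (K * ℓ * δ ^ α * Real.exp (m0 * (-β))) := by ring
    calc Real.exp (-lm + ε) +
          ℓ * Real.exp (ε * m0) * (M' * δ ^ α * Real.exp (-(α*γ) * m0))
        ≤ Real.exp (-lm + ε) + Real.exp (-lm + ε) * (K * ℓ * δ ^ α * r ^ (min i (k-i))) := by
          linarith
      _ = Real.exp (-lm + ε) * (1 + K * ℓ * δ ^ α * r ^ (min i (k-i))) := by ring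
      _ ≤ Real.exp (-lm + ε) * Real.exp (K * ℓ * δ ^ α * r ^ (min i (k-i))) :=
          mul_le_mul_of_nonneg_left hexp1 (Real.exp_pos _).le
  -- Claim B : backward bound
  have ClaimB : ∀ i : ℕ, i ≤ k → ∀ n : ℕ, i + n ≤ k → ∀ u : V,
      ‖((cocycle f A i p)⁻¹ : (V →L[ℝ] V)ˣ).val
          (((cocycle f A n (f^[i] x))⁻¹ : (V →L[ℝ] V)ˣ).val u)‖ ≤
        Real.exp (((i:ℝ) + n) * (-lm + ε)) * Real.exp (K * ℓ * δ ^ α * R i) *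
          (ℓ * Real.exp (ε * ((min (i+n) (k-(i+n)) : ℕ) : ℝ)) * ‖u‖) := by
    intro i
    induction i with
    | zero =>
      intro _ n hn u
      have h4 : ∀ w : V, ((cocycle f A 0 p)⁻¹ : (V →L[ℝ] V)ˣ).val w = w := by
        intro w; rw [cocycle_zero]; simp
      rw [h4]
      have hemp : R 0 = 0 := by simp [hRdef]
      rw [hemp, mul_zero, Real.exp_zero, mul_one]
      have h3 : N (0 + n) u ≤ ℓ * Real.exp (ε * ((min (0+n) (k-(0+n)) : ℕ) : ℝ)) * ‖u‖ :=
        (hN (0 + n) (by omega) u).2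
      calc ‖((cocycle f A n (f^[0] x))⁻¹ : (V →L[ℝ] V)ˣ).val u‖
          ≤ N 0 (((cocycle f A n (f^[0] x))⁻¹ : (V →L[ℝ] V)ˣ).val u) :=
            (hN 0 (by omega) _).1
        _ ≤ Real.exp (n * (-lm + ε)) * N (0 + n) u := L2 n 0 (by omega) u
        _ ≤ Real.exp (n * (-lm + ε)) *
              (ℓ * Real.exp (ε * ((min (0+n) (k-(0+n)) : ℕ) : ℝ)) * ‖u‖) :=
            mul_le_mul_of_nonneg_left h3 (Real.exp_pos _).le
        _ = Real.exp ((((0:ℕ):ℝ) + (n:ℝ)) * (-lm + ε)) *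
              (ℓ * Real.exp (ε * ((min (0+n) (k-(0+n)) : ℕ) : ℝ)) * ‖u‖) := by
            norm_num
    | succ i ih =>
      intro hik n hin u
      have hik' : i ≤ k := by omega
      have hilt : i < k := by omega
      set Qni : (V →L[ℝ] V) := ((cocycle f A n (f^[i+1] x))⁻¹ : (V →L[ℝ] V)ˣ).val
        with hQnidef
      set w : V := Qni u with hwdef
      set D : V →L[ℝ] V := ((A (f^[i] p))⁻¹ : (V →L[ℝ] V)ˣ).val -
        ((A (f^[i] x))⁻¹ : (V →L[ℝ] V)ˣ).val with hDdef
      set m0 : ℝ := ((min i (k-i) : ℕ) : ℝ) with hm0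
      set mtop : ℝ := ((min ((i+1)+n) (k-((i+1)+n)) : ℕ) : ℝ) with hmtop
      have hsplit : ∀ z : V, ((cocycle f A (i+1) p)⁻¹ : (V →L[ℝ] V)ˣ).val z
          = ((cocycle f A i p)⁻¹ : (V →L[ℝ] V)ˣ).val
              (((A (f^[i] p))⁻¹ : (V →L[ℝ] V)ˣ).val z) := by
        intro z
        rw [cocycle_succ', mul_inv_rev, Units.val_mul, ContinuousLinearMap.mul_apply]
      have hdecomp : ((A (f^[i] p))⁻¹ : (V →L[ℝ] V)ˣ).val w
          = ((A (f^[i] x))⁻¹ : (V →L[ℝ] V)ˣ).val w + D w := by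
        simp [hDdef, ContinuousLinearMap.sub_apply]
      -- term 1
      have hterm1 : ‖((cocycle f A i p)⁻¹ : (V →L[ℝ] V)ˣ).val
            (((A (f^[i] x))⁻¹ : (V →L[ℝ] V)ˣ).val w)‖ ≤
          Real.exp (((i:ℝ) + n) * (-lm + ε)) * Real.exp (-lm + ε) *
            Real.exp (K * ℓ * δ ^ α * R i) * (ℓ * Real.exp (ε * mtop) * ‖u‖) := by
        have hcoc : cocycle f A (n+1) (f^[i] x)
            = cocycle f A n (f^[i+1] x) * A (f^[i] x) := by
          rw [show cocycle f A (n+1) (f^[i] x)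
              = cocycle f A n (f (f^[i] x)) * A (f^[i] x) from rfl,
            Function.iterate_succ_apply']
        have h := ih hik' (n+1) (by omega) u
        rw [hcoc, mul_inv_rev, Units.val_mul, ContinuousLinearMap.mul_apply] at h
        have hidx : i + (n+1) = (i+1) + n := by omega
        rw [hidx] at h
        calc ‖((cocycle f A i p)⁻¹ : (V →L[ℝ] V)ˣ).val
              (((A (f^[i] x))⁻¹ : (V →L[ℝ] V)ˣ).val w)‖
            ≤ Real.exp (((i:ℝ) + (n+1:ℕ)) * (-lm + ε)) * Real.exp (K * ℓ * δ ^ α * R i) *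
              (ℓ * Real.exp (ε * mtop) * ‖u‖) := h
          _ = Real.exp (((i:ℝ) + n) * (-lm + ε)) * Real.exp (-lm + ε) *
              Real.exp (K * ℓ * δ ^ α * R i) * (ℓ * Real.exp (ε * mtop) * ‖u‖) := by
              rw [show ((i:ℝ) + (n+1:ℕ)) * (-lm + ε)
                  = ((i:ℝ) + n) * (-lm + ε) + (-lm + ε) by push_cast; ring, Real.exp_add]
      -- bound on ‖w‖
      have hwb : ‖w‖ ≤ Real.exp ((n:ℝ) * (-lm + ε)) * (ℓ * Real.exp (ε * mtop) * ‖u‖) := by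
        calc ‖w‖ ≤ N (i+1) w := (hN (i+1) (by omega) w).1
          _ ≤ Real.exp ((n:ℝ) * (-lm + ε)) * N ((i+1) + n) u := L2 n (i+1) (by omega) u
          _ ≤ Real.exp ((n:ℝ) * (-lm + ε)) * (ℓ * Real.exp (ε * mtop) * ‖u‖) :=
              mul_le_mul_of_nonneg_left ((hN ((i+1)+n) (by omega) u).2) (Real.exp_pos _).le
      -- term 2
      have hterm2 : ‖((cocycle f A i p)⁻¹ : (V →L[ℝ] V)ˣ).val (D w)‖ ≤
          Real.exp ((i:ℝ) * (-lm + ε)) * Real.exp (K * ℓ * δ ^ α * R i) *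
            (ℓ * Real.exp (ε * m0) *
              ((M' * δ ^ α * Real.exp (-(α*γ) * m0)) *
                (Real.exp ((n:ℝ) * (-lm + ε)) * (ℓ * Real.exp (ε * mtop) * ‖u‖)))) := by
        have h := ih hik' 0 (by omega) (D w)
        rw [cocycle_zero] at h
        simp only [inv_one, Units.val_one, ContinuousLinearMap.one_apply, Nat.add_zero,
          Nat.cast_zero, add_zero] at h
        have hDb : ‖D w‖ ≤ (M' * δ ^ α * Real.exp (-(α*γ) * m0)) * ‖w‖ :=
          le_trans (ContinuousLinearMap.le_opNorm _ _)
            (mul_le_mul_of_nonneg_right (hΔ i hik').2 (norm_nonneg _))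
        calc ‖((cocycle f A i p)⁻¹ : (V →L[ℝ] V)ˣ).val (D w)‖
            ≤ Real.exp ((i:ℝ) * (-lm + ε)) * Real.exp (K * ℓ * δ ^ α * R i) *
              (ℓ * Real.exp (ε * m0) * ‖D w‖) := h
          _ ≤ Real.exp ((i:ℝ) * (-lm + ε)) * Real.exp (K * ℓ * δ ^ α * R i) *
              (ℓ * Real.exp (ε * m0) *
                ((M' * δ ^ α * Real.exp (-(α*γ) * m0)) * ‖w‖)) := by
              refine mul_le_mul_of_nonneg_left ?_ (by positivity)
              exact mul_le_mul_of_nonneg_left hDb (by positivity)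
          _ ≤ Real.exp ((i:ℝ) * (-lm + ε)) * Real.exp (K * ℓ * δ ^ α * R i) *
              (ℓ * Real.exp (ε * m0) *
                ((M' * δ ^ α * Real.exp (-(α*γ) * m0)) *
                  (Real.exp ((n:ℝ) * (-lm + ε)) * (ℓ * Real.exp (ε * mtop) * ‖u‖)))) := by
              refine mul_le_mul_of_nonneg_left ?_ (by positivity)
              refine mul_le_mul_of_nonneg_left ?_ (by positivity)
              exact mul_le_mul_of_nonneg_left hwb (by positivity)
      -- combine
      set G : ℝ := Real.exp (((i:ℝ) + n) * (-lm + ε)) * Real.exp (K * ℓ * δ ^ α * R i) *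
        (ℓ * Real.exp (ε * mtop) * ‖u‖) with hGdef
      have hG0 : 0 ≤ G := by rw [hGdef]; positivity
      have hsB := hstepB i hilt
      rw [← hm0] at hsB
      have htot : ‖((cocycle f A (i+1) p)⁻¹ : (V →L[ℝ] V)ˣ).val
            (((cocycle f A n (f^[i+1] x))⁻¹ : (V →L[ℝ] V)ˣ).val u)‖ ≤
          ‖((cocycle f A i p)⁻¹ : (V →L[ℝ] V)ˣ).val
            (((A (f^[i] x))⁻¹ : (V →L[ℝ] V)ˣ).val w)‖ +
          ‖((cocycle f A i p)⁻¹ : (V →L[ℝ] V)ˣ).val (D w)‖ := by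
        rw [hsplit, hdecomp, map_add]
        exact norm_add_le _ _
      calc ‖((cocycle f A (i+1) p)⁻¹ : (V →L[ℝ] V)ˣ).val
            (((cocycle f A n (f^[i+1] x))⁻¹ : (V →L[ℝ] V)ˣ).val u)‖
          ≤ ‖((cocycle f A i p)⁻¹ : (V →L[ℝ] V)ˣ).val
              (((A (f^[i] x))⁻¹ : (V →L[ℝ] V)ˣ).val w)‖ +
            ‖((cocycle f A i p)⁻¹ : (V →L[ℝ] V)ˣ).val (D w)‖ := htot
        _ ≤ (Real.exp (((i:ℝ) + n) * (-lm + ε)) * Real.exp (-lm + ε) *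
              Real.exp (K * ℓ * δ ^ α * R i) * (ℓ * Real.exp (ε * mtop) * ‖u‖)) +
            (Real.exp ((i:ℝ) * (-lm + ε)) * Real.exp (K * ℓ * δ ^ α * R i) *
              (ℓ * Real.exp (ε * m0) *
                ((M' * δ ^ α * Real.exp (-(α*γ) * m0)) *
                  (Real.exp ((n:ℝ) * (-lm + ε)) * (ℓ * Real.exp (ε * mtop) * ‖u‖))))) :=
            add_le_add hterm1 hterm2
        _ = G * (Real.exp (-lm + ε) +
              ℓ * Real.exp (ε * m0) * (M' * δ ^ α * Real.exp (-(α*γ) * m0))) := by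
            rw [hGdef, show ((i:ℝ) + n) * (-lm + ε)
                = (i:ℝ) * (-lm + ε) + (n:ℝ) * (-lm + ε) by ring, Real.exp_add]
            ring
        _ ≤ G * (Real.exp (-lm + ε) * Real.exp (K * ℓ * δ ^ α * r ^ (min i (k-i)))) :=
            mul_le_mul_of_nonneg_left hsB hG0
        _ = Real.exp ((((i+1:ℕ):ℝ) + n) * (-lm + ε)) *
              Real.exp (K * ℓ * δ ^ α * R (i+1)) * (ℓ * Real.exp (ε * mtop) * ‖u‖) := by
            rw [hGdef, hRsucc i,
              show (((i+1:ℕ):ℝ) + n) * (-lm + ε)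
                = ((i:ℝ) + n) * (-lm + ε) + (-lm + ε) by push_cast; ring,
              Real.exp_add,
              show K * ℓ * δ ^ α * (R i + r ^ (min i (k-i)))
                = K * ℓ * δ ^ α * R i + K * ℓ * δ ^ α * r ^ (min i (k-i)) by ring,
              Real.exp_add]
            simp only [Real.exp_add]
            ring
  -- conclusion
  intro i hik
  have hRS : K * ℓ * δ ^ α * R i ≤ K * S * ℓ * δ ^ α := by
    have h1 : K * ℓ * δ ^ α * R i = (K * ℓ * δ ^ α) * R i := by ring
    have h2 : K * S * ℓ * δ ^ α = (K * ℓ * δ ^ α) * S := by ring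
    rw [h1, h2]
    exact mul_le_mul_of_nonneg_left (hRle i hik) (by positivity)
  constructor
  · refine ContinuousLinearMap.opNorm_le_bound _ (by positivity) fun u => ?_
    have h := ClaimA i hik 0 (by omega) u
    rw [cocycle_zero] at h
    simp only [Units.val_one, ContinuousLinearMap.one_apply, Nat.cast_zero, add_zero] at h
    calc ‖(cocycle f A i p).val u‖
        ≤ Real.exp ((i:ℝ) * (lp + ε)) * Real.exp (K * ℓ * δ ^ α * R i) * (ℓ * ‖u‖) := h
      _ ≤ Real.exp ((i:ℝ) * (lp + ε)) * Real.exp (K * S * ℓ * δ ^ α) * (ℓ * ‖u‖) := by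
          refine mul_le_mul_of_nonneg_right ?_ (by positivity)
          exact mul_le_mul_of_nonneg_left (Real.exp_le_exp.mpr hRS) (Real.exp_pos _).le
      _ = ℓ * Real.exp (K * S * ℓ * δ ^ α) * Real.exp ((i:ℝ) * (lp + ε)) * ‖u‖ := by ring
  · refine ContinuousLinearMap.opNorm_le_bound _ (by positivity) fun u => ?_
    have h := ClaimB i hik 0 (by omega) u
    rw [cocycle_zero] at h
    simp only [inv_one, Units.val_one, ContinuousLinearMap.one_apply, Nat.add_zero,
      Nat.cast_zero, add_zero] at h
    calc ‖((cocycle f A i p)⁻¹ : (V →L[ℝ] V)ˣ).val u‖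
        ≤ Real.exp ((i:ℝ) * (-lm + ε)) * Real.exp (K * ℓ * δ ^ α * R i) *
            (ℓ * Real.exp (ε * ((min i (k-i) : ℕ) : ℝ)) * ‖u‖) := h
      _ ≤ Real.exp ((i:ℝ) * (-lm + ε)) * Real.exp (K * S * ℓ * δ ^ α) *
            (ℓ * Real.exp (ε * ((min i (k-i) : ℕ) : ℝ)) * ‖u‖) := by
          refine mul_le_mul_of_nonneg_right ?_ (by positivity)
          exact mul_le_mul_of_nonneg_left (Real.exp_le_exp.mpr hRS) (Real.exp_pos _).le
      _ = ℓ * Real.exp (ε * ((min i (k-i) : ℕ) : ℝ)) * Real.exp (K * S * ℓ * δ ^ α) *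
            Real.exp ((i:ℝ) * (-lm + ε)) * ‖u‖ := by ring
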